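/- arXiv:1807.03703 — 3 statements merged into one kernel-verified Lean document; each statement's English description precedes it below -/
import Mathlib

section
/- For any prompt schedule on P processors of a well-formed DAG g containing a thread a at priority ρ, the response time T(a) of thread a satisfies T(a) ≤ W_{≰ρ}(comp(a))/P + span_a(comp(a)), where W_{≰ρ}(comp(a)) is the number of vertices of the competitor subgraph comp(a) whose priority is not less than ρ, and span_a(comp(a)) is the length of the longest path in comp(a) ending at the last vertex of a. -/
/-! Cost DAGs with prioritized threads, spawn edges, and join edges. -/

/-- A DAG of prioritized threads.  Each thread (drawn from the index type `T`)
has a priority and a finite sequence of vertices (connected implicitly by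
thread edges).  `spawn` contains spawn edges `(u, a)` from a vertex `u` to
(the first vertex of) a thread `a`; `join` contains join edges `(a, u)` from
(the last vertex of) a thread `a` to a vertex `u`.  `owner u` is the thread
containing the vertex `u`. -/
structure Dag (V P T : Type) where
  prio : T → P
  verts : T → List V
  owner : V → T
  spawn : Set (V × T)
  join : Set (T × V)

namespace Dag

variable {V P T : Type}

/-- Thread edge: `u` and `u'` are consecutive vertices of some thread. -/
def threadEdge (g : Dag V P T) (u u' : V) : Prop :=
  ∃ t i, (g.verts t)[i]? = some u ∧ (g.verts t)[i+1]? = some u'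

/-- Spawn edge, viewed as an edge from `u` to the first vertex of the spawned thread. -/
def spawnEdge (g : Dag V P T) (u u' : V) : Prop :=
  ∃ t, (u, t) ∈ g.spawn ∧ (g.verts t).head? = some u'

/-- Join edge, viewed as an edge from the last vertex of the joined thread to `u'`. -/
def joinEdge (g : Dag V P T) (u u' : V) : Prop :=
  ∃ t, (t, u') ∈ g.join ∧ (g.verts t).getLast? = some u

/-- Any edge of the DAG. -/
def edge (g : Dag V P T) (u u' : V) : Prop :=
  g.threadEdge u u' ∨ g.spawnEdge u u' ∨ g.joinEdge u u'

/-- `g.anc u u'` : there is a directed path from `u` to `u'` (u is an ancestor of u'). -/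
def anc (g : Dag V P T) : V → V → Prop :=
  Relation.ReflTransGen g.edge

/-- The DAG is acyclic. -/
def Acyclic (g : Dag V P T) : Prop :=
  ∀ u u', g.anc u u' → g.anc u' u → u = u'

/-- Every vertex in a thread's vertex list is owned by that thread. -/
def OwnerConsistent (g : Dag V P T) : Prop :=
  ∀ t u, u ∈ g.verts t → g.owner u = t

/-- The priority of a vertex is the priority of the thread containing it. -/
def vprio (g : Dag V P T) (u : V) : P := g.prio (g.owner u)

variable [PartialOrder P]

/-- Well-formedness: for every thread with first vertex `u₁` and last vertex `uₙ`,
every ancestor `u` of `uₙ` which is not an ancestor of `u₁` has priority at least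
the priority of the thread. -/
def WellFormed (g : Dag V P T) : Prop :=
  ∀ t u₁ uₙ u, (g.verts t).head? = some u₁ → (g.verts t).getLast? = some uₙ →
    g.anc u uₙ → ¬ g.anc u u₁ → g.prio t ≤ g.vprio u

/-- Strong well-formedness: (1) every join edge `(a, u)` goes from a thread `a`
to a vertex `u` of a thread of lower-or-equal priority; (2) every spawn edge
`(u', a)` with a matching join edge `(a, u)` admits a path from `u'` to `u`
whose first edge is a thread edge. -/
def StronglyWellFormed (g : Dag V P T) : Prop :=
  (∀ a u, (a, u) ∈ g.join → g.vprio u ≤ g.prio a) ∧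
  (∀ a u' u, (u', a) ∈ g.spawn → (a, u) ∈ g.join →
    ∃ w, g.threadEdge u' w ∧ g.anc w u)

end Dag

/-! Schedules of a DAG on `Pn` processors. -/

namespace Dag

variable {V P T : Type}

/-- The set of vertices executed before step `n` (steps are numbered `0, 1, 2, ...`;
step `m` executes the finite set `sched m`). -/
def executedBy (sched : ℕ → Finset V) (n : ℕ) : Set V :=
  {u | ∃ m < n, u ∈ sched m}

/-- A vertex is ready at (the start of) step `n` if it has not been executed and
all of its proper ancestors have been executed. -/
def readyAt (g : Dag V P T) (sched : ℕ → Finset V) (n : ℕ) (u : V) : Prop :=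
  u ∉ executedBy sched n ∧ ∀ u', g.edge u' u → u' ∈ executedBy sched n

/-- A valid schedule on `Pn` processors: at each step, at most `Pn` ready vertices
are executed. -/
structure IsSchedule (g : Dag V P T) (Pn : ℕ) (sched : ℕ → Finset V) : Prop where
  card_le : ∀ n, (sched n).card ≤ Pn
  ready : ∀ n u, u ∈ sched n → g.readyAt sched n u

/-- A greedy schedule executes `min Pn (#ready vertices)` vertices at each step. -/
def Greedy (g : Dag V P T) (Pn : ℕ) (sched : ℕ → Finset V) : Prop :=
  ∀ n, (sched n).card = min Pn {u | g.readyAt sched n u}.ncard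

variable [PartialOrder P]

/-- A prompt schedule is greedy and never leaves a ready vertex unexecuted while
executing a ready vertex of strictly lower priority. -/
def Prompt (g : Dag V P T) (Pn : ℕ) (sched : ℕ → Finset V) : Prop :=
  g.Greedy Pn sched ∧
  ∀ n u v, g.readyAt sched n u → g.readyAt sched n v →
    u ∈ sched n → v ∉ sched n → ¬ (g.vprio u < g.vprio v)

/-- The competitor subgraph of thread `a` with first vertex `s` and last vertex `t`:
the vertices of `g` that are neither proper ancestors of `s` nor proper
descendants of `t`. -/
def compSet (g : Dag V P T) (s t : V) : Set V :=
  {u | ¬ (g.anc u s ∧ u ≠ s) ∧ ¬ (g.anc t u ∧ u ≠ t)}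

/-- `l` is a path in the vertex set `S` ending at `t`. -/
def IsPathTo (g : Dag V P T) (S : Set V) (t : V) (l : List V) : Prop :=
  l ≠ [] ∧ l.Chain' g.edge ∧ l.Nodup ∧ (∀ u ∈ l, u ∈ S) ∧ l.getLast? = some t

end Dag

namespace Dag

variable {V P T : Type}

lemma executedBy_mono (sched : ℕ → Finset V) {n n' : ℕ} (h : n ≤ n') :
    executedBy sched n ⊆ executedBy sched n' := by
  rintro u ⟨m, hm, hu⟩
  exact ⟨m, lt_of_lt_of_le hm h, hu⟩

lemma anc_executed (g : Dag V P T) {Pn : ℕ} {sched : ℕ → Finset V}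
    (hs : g.IsSchedule Pn sched) :
    ∀ n u, u ∈ sched n → ∀ u', g.anc u' u → u' ∈ executedBy sched (n+1) := by
  intro n
  induction n using Nat.strong_induction_on with
  | _ n IH =>
    intro u hu u' hanc
    rcases Relation.ReflTransGen.cases_tail hanc with h | ⟨w, hw, hedge⟩
    · subst h; exact ⟨n, n.lt_succ_self, hu⟩
    · obtain ⟨m, hm, hwm⟩ := (hs.ready n u hu).2 w hedge
      obtain ⟨k, hk, hk'⟩ := IH m hm w hwm u' hw
      exact ⟨k, by omega, hk'⟩

lemma ready_anc_executed (g : Dag V P T) {Pn : ℕ} {sched : ℕ → Finset V}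
    (hs : g.IsSchedule Pn sched) {n : ℕ} {u : V} (hr : g.readyAt sched n u)
    {u' : V} (hanc : g.anc u' u) (hne : u' ≠ u) : u' ∈ executedBy sched n := by
  rcases Relation.ReflTransGen.cases_tail hanc with h | ⟨w, hw, hedge⟩
  · exact absurd h.symm hne
  · obtain ⟨m, hm, hwm⟩ := hr.2 w hedge
    obtain ⟨k, hk, hk'⟩ := anc_executed g hs m w hwm u' hw
    exact ⟨k, by omega, hk'⟩

end Dag

open Dag in
/-- For any prompt schedule on `Pn` processors of a well-formed
DAG `g` containing a thread `a` at priority `ρ` with first vertex `s` and last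
vertex `t`, the response time of `a` (from the step at which `s` is ready,
exclusive, to the step at which `t` is executed, inclusive) is at most
`W_{≴ρ}(comp(a)) / Pn + span_a(comp(a))`. -/
theorem prompt_response_time {V P T : Type} [Fintype V] [PartialOrder P]
    (g : Dag V P T) (hown : g.OwnerConsistent) (hacyc : g.Acyclic)
    (hwf : g.WellFormed)
    (Pn : ℕ) (hPn : 0 < Pn) (sched : ℕ → Finset V)
    (hsched : g.IsSchedule Pn sched) (hprompt : g.Prompt Pn sched)
    (a : T) (ρ : P) (hρ : g.prio a = ρ) (s t : V)
    (hs : (g.verts a).head? = some s) (ht : (g.verts a).getLast? = some t)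
    -- `s` is ready at the start of step `ns`, and `t` is executed at step `nt`.
    (ns nt : ℕ) (hns : g.readyAt sched ns s) (hnt : t ∈ sched nt)
    -- priority work of the competitor subgraph at priorities not less than `ρ`
    (W : ℕ) (hW : W = ((g.compSet s t) ∩ {u | ¬ g.vprio u < ρ}).ncard)
    -- `SB` bounds the length of every path in the competitor subgraph ending at `t`
    (SB : ℕ) (hSB : ∀ l : List V, g.IsPathTo (g.compSet s t) t l → l.length ≤ SB) :
    (nt + 1 - ns : ℝ) ≤ (W : ℝ) / (Pn : ℝ) + (SB : ℝ) := by
  classical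
  have hPn' : (0 : ℝ) < (Pn : ℝ) := by exact_mod_cast hPn
  -- trivial case: interval is empty
  by_cases hcase : nt + 1 ≤ ns
  · have h1 : (nt : ℝ) + 1 - (ns : ℝ) ≤ 0 := by
      have : (nt : ℝ) + 1 ≤ (ns : ℝ) := by exact_mod_cast hcase
      linarith
    have h2 : (0 : ℝ) ≤ (W : ℝ) / (Pn : ℝ) + (SB : ℝ) := by positivity
    linarith
  have hnsnt : ns ≤ nt := by omega
  -- the set of "competitor work at priority not less than ρ"
  set Wset : Set V := (g.compSet s t) ∩ {u | ¬ g.vprio u < ρ} with hWset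
  set Wx : ℕ → ℕ := fun n => (Wset ∩ executedBy sched n).ncard with hWx
  have hWmono : ∀ {n n' : ℕ}, n ≤ n' → Wx n ≤ Wx n' := by
    intro n n' h
    exact Set.ncard_le_ncard (Set.inter_subset_inter_right _ (executedBy_mono sched h))
      (Set.toFinite _)
  have htready : g.readyAt sched nt t := hsched.ready nt t hnt
  -- ready vertices in [ns, nt] are in the competitor set
  have hready_comp : ∀ n u, ns ≤ n → n ≤ nt → g.readyAt sched n u →
      u ∈ g.compSet s t := by
    intro n u h1 h2 hr
    constructor
    · rintro ⟨hanc, hne⟩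
      exact hr.1 (executedBy_mono sched h1 (ready_anc_executed g hsched hns hanc hne))
    · rintro ⟨hanc, hne⟩
      exact htready.1 (executedBy_mono sched h2
        (ready_anc_executed g hsched hr hanc (Ne.symm hne)))
  -- ready ancestors of t at steps ≥ ns have priority at least ρ
  have hprio_ge : ∀ n u, ns ≤ n → g.readyAt sched n u → g.anc u t → ρ ≤ g.vprio u := by
    intro n u h1 hr hanc
    by_cases hus : u = s
    · subst hus
      have hmem : u ∈ g.verts a := List.mem_of_mem_head? hs
      have : g.vprio u = ρ := by
        rw [Dag.vprio, hown a u hmem, hρ]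
      rw [this]
    · by_cases hancs : g.anc u s
      · exact absurd (executedBy_mono sched h1
          (ready_anc_executed g hsched hns hancs hus)) hr.1
      · rw [← hρ]
        exact hwf a s t u hs ht hanc hancs
  -- complete steps: if a ready ancestor of t is not executed, the step executes
  -- Pn vertices, all in Wset, all new
  have hcomplete : ∀ n x, ns ≤ n → n ≤ nt → g.readyAt sched n x → g.anc x t →
      x ∉ sched n → Wx n + Pn ≤ Wx (n + 1) := by
    intro n x h1 h2 hxr hxt hxn
    have hgreedy := hprompt.1 n
    -- the step executes exactly Pn vertices
    have hcard : (sched n).card = Pn := by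
      by_contra hne
      have hlt : (sched n).card < Pn := lt_of_le_of_ne (hsched.card_le n) hne
      have hk : {u | g.readyAt sched n u}.ncard = (sched n).card := by
        omega
      have hsub : (↑(sched n) : Set V) ⊆ {u | g.readyAt sched n u} := by
        intro u hu; exact hsched.ready n u hu
      have heq : (↑(sched n) : Set V) = {u | g.readyAt sched n u} :=
        Set.eq_of_subset_of_ncard_le hsub
          (by rw [hk, Set.ncard_coe_finset]) (Set.toFinite _)
      have : x ∈ (↑(sched n) : Set V) := by rw [heq]; exact hxr
      exact hxn this
    have hρx : ρ ≤ g.vprio x := hprio_ge n x h1 hxr hxt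
    have hsub : (↑(sched n) : Set V) ⊆ Wset := by
      intro u hu
      have hur : g.readyAt sched n u := hsched.ready n u hu
      refine ⟨hready_comp n u h1 h2 hur, ?_⟩
      intro hlt
      exact hprompt.2 n u x hur hxr hu hxn (lt_of_lt_of_le hlt hρx)
    have hdisj : Disjoint (Wset ∩ executedBy sched n) (↑(sched n) : Set V) := by
      rw [Set.disjoint_right]
      intro u hu ⟨_, hu'⟩
      exact (hsched.ready n u hu).1 hu'
    have hsub2 : (Wset ∩ executedBy sched n) ∪ (↑(sched n) : Set V) ⊆
        Wset ∩ executedBy sched (n + 1) := by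
      rintro u (⟨h1', h2'⟩ | hu)
      · exact ⟨h1', executedBy_mono sched (Nat.le_succ n) h2'⟩
      · exact ⟨hsub hu, ⟨n, n.lt_succ_self, hu⟩⟩
    calc Wx n + Pn = (Wset ∩ executedBy sched n).ncard + (↑(sched n) : Set V).ncard := by
            rw [Set.ncard_coe_finset, hcard]
      _ = ((Wset ∩ executedBy sched n) ∪ (↑(sched n) : Set V)).ncard :=
            (Set.ncard_union_eq hdisj (Set.toFinite _) (Set.toFinite _)).symm
      _ ≤ Wx n.succ := Set.ncard_le_ncard hsub2 (Set.toFinite _)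
  -- the key induction
  have key : ∀ m, ∀ x, m ≤ nt → x ∈ sched m → ns ≤ m → g.anc x t →
      ∃ l : List V, l ≠ [] ∧ l.Chain' g.edge ∧ l.Nodup ∧
        (∀ u ∈ l, u ∈ g.compSet s t) ∧
        l.getLast? = some x ∧
        (∀ u ∈ l, ∃ j ≤ m, u ∈ sched j) ∧
        Pn * (m + 1 - ns) + Wx ns ≤ Pn * l.length + Wx (m + 1) := by
    intro m
    induction m using Nat.strong_induction_on with
    | _ m IH =>
      intro x hmnt hxm hnsm hxt
      have hxready : g.readyAt sched m x := hsched.ready m x hxm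
      -- least time at which all predecessors of x are executed
      have hPm : ∃ n, ∀ u', g.edge u' x → u' ∈ executedBy sched n :=
        ⟨m, hxready.2⟩
      set r := Nat.find hPm with hr
      have hrspec : ∀ u', g.edge u' x → u' ∈ executedBy sched r := Nat.find_spec hPm
      have hrm : r ≤ m := Nat.find_le hxready.2
      have hxnotexec : ∀ n, n ≤ m → x ∉ executedBy sched n := by
        intro n hn hmem
        exact hxready.1 (executedBy_mono sched hn hmem)
      have hxready' : ∀ n, r ≤ n → n ≤ m → g.readyAt sched n x := by
        intro n h1 h2
        exact ⟨hxnotexec n h2, fun u' he => executedBy_mono sched h1 (hrspec u' he)⟩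
      have hxnotsched : ∀ n, n < m → x ∉ sched n := by
        intro n h2 hmem
        exact hxnotexec m le_rfl ⟨n, h2, hmem⟩
      -- steps in [b, m) are complete
      have steps : ∀ b, r ≤ b → ns ≤ b → ∀ d, b + d ≤ m →
          Wx b + Pn * d ≤ Wx (b + d) := by
        intro b hrb hnsb d
        induction d with
        | zero => simp
        | succ d ihd =>
          intro hd
          have h1 := ihd (by omega)
          have h2 := hcomplete (b + d) x (by omega) (by omega)
            (hxready' _ (by omega) (by omega)) hxt (hxnotsched _ (by omega))
          have e : b + (d + 1) = (b + d) + 1 := by omega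
          rw [e]
          calc Wx b + Pn * (d + 1) = (Wx b + Pn * d) + Pn := by ring
            _ ≤ Wx (b + d) + Pn := by omega
            _ ≤ Wx ((b + d) + 1) := h2
      have hxcomp : x ∈ g.compSet s t := hready_comp m x hnsm hmnt hxready
      by_cases hrns : r ≤ ns
      · -- base case: x was ready already at ns
        refine ⟨[x], by simp, List.isChain_singleton x, by simp, by simpa using hxcomp, by simp,
          by simp; exact ⟨m, le_rfl, hxm⟩, ?_⟩
        have hst := steps ns hrns le_rfl (m - ns) (by omega)
        rw [show ns + (m - ns) = m from by omega] at hst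
        have hm1 : Wx m ≤ Wx (m + 1) := hWmono (Nat.le_succ m)
        have e : m + 1 - ns = (m - ns) + 1 := by omega
        rw [e]
        simp only [List.length_singleton]
        rw [show Pn * (m - ns + 1) = Pn * (m - ns) + Pn from by ring, mul_one]
        linarith
      · -- inductive case: find a predecessor executed at step r - 1
        push_neg at hrns
        have hr1 : 1 ≤ r := by omega
        have hnotPr : ¬ ∀ u', g.edge u' x → u' ∈ executedBy sched (r - 1) :=
          Nat.find_min hPm (by omega)
        push_neg at hnotPr
        obtain ⟨y, hey, hy⟩ := hnotPr
        obtain ⟨j, hj, hyj⟩ := hrspec y hey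
        have hjr : j = r - 1 := by
          by_contra hne
          exact hy ⟨j, by omega, hyj⟩
        subst hjr
        have hyt : g.anc y t := Relation.ReflTransGen.head hey hxt
        obtain ⟨l, hlne, hlch, hlnd, hlmem, hllast, hlexec, hlarith⟩ :=
          IH (r - 1) (by omega) y (by omega) hyj (by omega) hyt
        have hxnotl : x ∉ l := by
          intro hxl
          obtain ⟨j', hj', hxj'⟩ := hlexec x hxl
          exact hxnotexec m le_rfl ⟨j', by omega, hxj'⟩
        refine ⟨l ++ [x], by simp, ?_, ?_, ?_, by simp, ?_, ?_⟩
        · refine List.isChain_append.mpr ?_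
          refine ⟨hlch, List.isChain_singleton x, ?_⟩
          intro p hp q hq
          simp only [List.head?_cons, Option.mem_def, Option.some.injEq] at hq
          rw [hllast] at hp
          simp only [Option.mem_def, Option.some.injEq] at hp
          subst hp; subst hq
          exact hey
        · rw [List.nodup_append]
          exact ⟨hlnd, List.nodup_singleton x, by
            intro u hu v hv huv
            simp only [List.mem_singleton] at hv
            subst hv; subst huv
            exact hxnotl hu⟩
        · intro u hu
          rcases List.mem_append.mp hu with h | h
          · exact hlmem u h
          · simp only [List.mem_singleton] at h
            subst h; exact hxcomp
        · intro u hu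
          rcases List.mem_append.mp hu with h | h
          · obtain ⟨j', hj', hxj'⟩ := hlexec u h
            exact ⟨j', by omega, hxj'⟩
          · simp only [List.mem_singleton] at h
            subst h; exact ⟨m, le_rfl, hxm⟩
        · -- arithmetic
          rw [show r - 1 + 1 = r from by omega] at hlarith
          have hst := steps r le_rfl (by omega) (m - r) (by omega)
          rw [show r + (m - r) = m from by omega] at hst
          have hm1 : Wx m ≤ Wx (m + 1) := hWmono (Nat.le_succ m)
          rw [show Pn * (m + 1 - ns) = Pn * (m - r) + Pn + Pn * (r - ns) from by
              rw [show m + 1 - ns = (m - r) + 1 + (r - ns) from by omega]; ring,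
            show Pn * (l ++ [x]).length = Pn * l.length + Pn from by
              rw [List.length_append, List.length_singleton]; ring]
          have hlarith' : Pn * (r - ns) + Wx ns ≤ Pn * l.length + Wx r := hlarith
          linarith
  -- apply the key induction at (nt, t)
  obtain ⟨l, hlne, hlch, hlnd, hlmem, hllast, _, harith⟩ :=
    key nt t le_rfl hnt hnsnt Relation.ReflTransGen.refl
  have hpath : g.IsPathTo (g.compSet s t) t l := ⟨hlne, hlch, hlnd, hlmem, hllast⟩
  have hlen : l.length ≤ SB := hSB l hpath
  have hWle : Wx (nt + 1) ≤ W := by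
    rw [hW]
    exact Set.ncard_le_ncard Set.inter_subset_left (Set.toFinite _)
  -- combine: Pn * (nt + 1 - ns) ≤ Pn * SB + W
  have hfinal : Pn * (nt + 1 - ns) ≤ Pn * SB + W := by
    have h1 : Pn * l.length ≤ Pn * SB := Nat.mul_le_mul_left Pn hlen
    omega
  -- transfer to ℝ
  have hcast : ((nt : ℝ) + 1 - ns) = ((nt + 1 - ns : ℕ) : ℝ) := by
    rw [Nat.cast_sub (by omega)]
    push_cast; ring
  rw [hcast]
  rw [div_add' _ _ _ (ne_of_gt hPn'), le_div_iff₀ hPn']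
  have : ((Pn * (nt + 1 - ns) : ℕ) : ℝ) ≤ ((Pn * SB + W : ℕ) : ℝ) := by
    exact_mod_cast hfinal
  push_cast at this ⊢
  linarith
end

section
/- A greedy schedule of a DAG with W vertices and longest path length S on P processors completes in at most W/P + S steps. -/
/-! The classical Brent / Eager–Zahorjan–Lazowska bound for greedy schedules
of a DAG of unit-time tasks. -/

variable {V : Type}

/-- The set of vertices executed before step `n`. -/
def executedBy (sched : ℕ → Finset V) (n : ℕ) : Set V :=
  {u | ∃ m < n, u ∈ sched m}

/-- A vertex is ready at step `n` if it is unexecuted and all its predecessors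
have been executed. -/
def readyAt (edge : V → V → Prop) (sched : ℕ → Finset V) (n : ℕ) (u : V) : Prop :=
  u ∉ executedBy sched n ∧ ∀ u', edge u' u → u' ∈ executedBy sched n

/-- A valid schedule on `Pn` processors executes at most `Pn` ready vertices per step. -/
structure IsSchedule (edge : V → V → Prop) (Pn : ℕ) (sched : ℕ → Finset V) : Prop where
  card_le : ∀ n, (sched n).card ≤ Pn
  ready : ∀ n u, u ∈ sched n → readyAt edge sched n u

/-- A greedy schedule executes `min Pn (#ready vertices)` vertices at each step. -/
def Greedy (edge : V → V → Prop) (Pn : ℕ) (sched : ℕ → Finset V) : Prop :=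
  ∀ n, (sched n).card = min Pn {u | readyAt edge sched n u}.ncard

/-- Any chain of an acyclic relation has no duplicates. -/
lemma chain'_nodup {edge : V → V → Prop}
    (hacyc : ∀ u, ¬ Relation.TransGen edge u u) {l : List V}
    (hl : l.Chain' edge) : l.Nodup := by
  have h1 : l.Chain' (Relation.TransGen edge) :=
    hl.imp fun a b h => Relation.TransGen.single h
  have h2 : l.Pairwise (Relation.TransGen edge) := List.isChain_iff_pairwise.mp h1
  exact h2.imp fun {a b} h => by rintro rfl; exact hacyc _ h

/-- `executedBy` is monotone. -/
lemma executedBy_mono (sched : ℕ → Finset V) {m n : ℕ} (h : m ≤ n) :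
    executedBy sched m ⊆ executedBy sched n := by
  rintro u ⟨k, hk, hu⟩
  exact ⟨k, lt_of_lt_of_le hk h, hu⟩

/-- Key depth lemma: a nonempty chain of vertices all unexecuted at step `n`
witnesses that at most `S - l.length` incomplete steps have occurred so far. -/
lemma chain_incomplete_bound [Fintype V] (edge : V → V → Prop)
    (hacyc : ∀ u, ¬ Relation.TransGen edge u u)
    (Pn : ℕ) (sched : ℕ → Finset V)
    (hsched : IsSchedule edge Pn sched) (hgreedy : Greedy edge Pn sched)
    (S : ℕ) (hS : ∀ l : List V, l.Chain' edge → l.Nodup → l.length ≤ S) :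
    ∀ n (l : List V), l ≠ [] → l.Chain' edge →
      (∀ x ∈ l, x ∉ executedBy sched n) →
      l.length + ((Finset.range n).filter fun m => (sched m).card < Pn).card ≤ S := by
  intro n
  induction n with
  | zero =>
    intro l _ hc _
    simpa using hS l hc (chain'_nodup hacyc hc)
  | succ n ih =>
    intro l hne hc hunexec
    have hmono : ∀ x ∈ l, x ∉ executedBy sched n := fun x hx h =>
      hunexec x hx (executedBy_mono sched (Nat.le_succ n) h)
    by_cases hcomp : (sched n).card < Pn
    · -- incomplete step: all ready vertices were executed, so the head of the
      -- chain is not ready and has an unexecuted predecessor.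
      obtain ⟨u, t, rfl⟩ := List.exists_cons_of_ne_nil hne
      have hu1 : u ∉ executedBy sched (n + 1) := hunexec u (by simp)
      have husched : u ∉ sched n := fun h => hu1 ⟨n, Nat.lt_succ_self n, h⟩
      -- since the step is incomplete and greedy, every ready vertex is scheduled
      have hready_sub : ∀ v, readyAt edge sched n v → v ∈ sched n := by
        intro v hv
        have hg := hgreedy n
        have hfin : {w | readyAt edge sched n w}.Finite := Set.toFinite _
        have hcard : (sched n).card = {w | readyAt edge sched n w}.ncard := by
          omega
        have hsub : ↑(sched n) ⊆ {w | readyAt edge sched n w} := fun w hw =>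
          hsched.ready n w hw
        have : ↑(sched n) = {w | readyAt edge sched n w} :=
          Set.eq_of_subset_of_ncard_le hsub
            (by rw [Set.ncard_coe_finset]; omega) hfin
        have hv' : v ∈ ({w | readyAt edge sched n w} : Set V) := hv
        rw [← this] at hv'
        exact hv'
      have hnotready : ¬ readyAt edge sched n u := fun h => husched (hready_sub u h)
      have hu2 : u ∉ executedBy sched n := hmono u (by simp)
      rw [readyAt] at hnotready
      push_neg at hnotready
      obtain ⟨u', hedge, hu'⟩ := hnotready hu2
      -- prepend u' to the chain
      have hchain' : (u' :: u :: t).Chain' edge := hc.cons (by simp [hedge])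
      have hunexec' : ∀ x ∈ u' :: u :: t, x ∉ executedBy sched n := by
        intro x hx
        rcases List.mem_cons.mp hx with rfl | hx
        · exact hu'
        · exact hmono x hx
      have := ih (u' :: u :: t) (by simp) hchain' hunexec'
      have hfilter : ((Finset.range (n + 1)).filter
          fun m => (sched m).card < Pn).card =
          ((Finset.range n).filter fun m => (sched m).card < Pn).card + 1 := by
        rw [Finset.range_add_one, Finset.filter_insert, if_pos hcomp,
          Finset.card_insert_of_notMem (by simp)]
      simp only [List.length_cons] at this ⊢
      omega
    · -- complete step: the count of incomplete steps does not change
      have hfilter : ((Finset.range (n + 1)).filter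
          fun m => (sched m).card < Pn).card =
          ((Finset.range n).filter fun m => (sched m).card < Pn).card := by
        rw [Finset.range_add_one, Finset.filter_insert, if_neg hcomp]
      rw [hfilter]
      exact ih l hne hc hmono

/-- A greedy schedule of a DAG with `W` vertices and longest
path length `S` on `Pn` processors completes in at most `W / Pn + S` steps:
by any step `n ≥ W / Pn + S`, every vertex has been executed. -/
theorem greedy_schedule_bound [Fintype V] (edge : V → V → Prop)
    (hacyc : ∀ u, ¬ Relation.TransGen edge u u)
    (Pn : ℕ) (hPn : 0 < Pn) (sched : ℕ → Finset V)
    (hsched : IsSchedule edge Pn sched) (hgreedy : Greedy edge Pn sched)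
    (W : ℕ) (hW : W = Fintype.card V)
    (S : ℕ) (hS : ∀ l : List V, l.Chain' edge → l.Nodup → l.length ≤ S)
    (n : ℕ) (hn : (W : ℝ) / (Pn : ℝ) + (S : ℝ) ≤ (n : ℝ)) :
    ∀ u : V, u ∈ executedBy sched n := by
  classical
  by_contra h
  push_neg at h
  obtain ⟨u, hu⟩ := h
  -- counts of incomplete steps
  set I := ((Finset.range n).filter fun m => (sched m).card < Pn).card with hI
  -- the chain [u] gives 1 + I ≤ S
  have hIS : 1 + I ≤ S := by
    have := chain_incomplete_bound edge hacyc Pn sched hsched hgreedy S hS n [u]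
      (by simp) (List.isChain_singleton u) (by simpa using hu)
    simpa using this
  -- S ≤ n from hn
  have hSn : (S : ℝ) ≤ (n : ℝ) := by
    have : (0 : ℝ) ≤ (W : ℝ) / (Pn : ℝ) := by positivity
    linarith
  have hSn' : S ≤ n := by exact_mod_cast hSn
  -- W ≤ Pn * (n - S) over ℕ
  have hWn : W ≤ Pn * (n - S) := by
    have hPn' : (0 : ℝ) < (Pn : ℝ) := by exact_mod_cast hPn
    have h1 : (W : ℝ) / (Pn : ℝ) ≤ (n : ℝ) - (S : ℝ) := by linarith
    rw [div_le_iff₀ hPn'] at h1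
    have : (W : ℝ) ≤ (Pn : ℝ) * ((n : ℝ) - (S : ℝ)) := by linarith
    have hcast : ((Pn * (n - S) : ℕ) : ℝ) = (Pn : ℝ) * ((n : ℝ) - (S : ℝ)) := by
      push_cast [Nat.cast_sub hSn']
      ring
    exact_mod_cast hcast ▸ this
  -- schedules at different steps are disjoint
  have hdisj : ∀ m₁ ∈ Finset.range n, ∀ m₂ ∈ Finset.range n, m₁ ≠ m₂ →
      Disjoint (sched m₁) (sched m₂) := by
    have key : ∀ m₁ m₂, m₁ < m₂ → Disjoint (sched m₁) (sched m₂) := by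
      intro m₁ m₂ hlt
      rw [Finset.disjoint_left]
      intro v hv1 hv2
      exact (hsched.ready m₂ v hv2).1 ⟨m₁, hlt, hv1⟩
    intro m₁ _ m₂ _ hne
    rcases lt_or_gt_of_ne hne with h | h
    · exact key _ _ h
    · exact (key _ _ h).symm
  -- total executed count
  have hE : ∑ m ∈ Finset.range n, (sched m).card =
      ((Finset.range n).biUnion sched).card :=
    (Finset.card_biUnion hdisj).symm
  have hEle : ((Finset.range n).biUnion sched).card ≤ W - 1 := by
    have hsub : (Finset.range n).biUnion sched ⊆ Finset.univ.erase u := by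
      intro v hv
      simp only [Finset.mem_biUnion, Finset.mem_range] at hv
      obtain ⟨m, hm, hvm⟩ := hv
      refine Finset.mem_erase.mpr ⟨?_, Finset.mem_univ v⟩
      rintro rfl
      exact hu ⟨m, hm, hvm⟩
    have := Finset.card_le_card hsub
    rw [Finset.card_erase_of_mem (Finset.mem_univ u), Finset.card_univ] at this
    omega
  -- lower bound on the executed count from complete steps
  have hC : Pn * (n - I) ≤ ∑ m ∈ Finset.range n, (sched m).card := by
    have hcompl : ((Finset.range n).filter fun m => ¬ (sched m).card < Pn).card
        = n - I := by
      have := Finset.card_filter_add_card_filter_not (s := Finset.range n)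
        (p := fun m => (sched m).card < Pn)
      simp only [Finset.card_range] at this
      omega
    calc Pn * (n - I)
        = ∑ _m ∈ (Finset.range n).filter fun m => ¬ (sched m).card < Pn, Pn := by
          rw [Finset.sum_const, hcompl, smul_eq_mul, mul_comm]
      _ ≤ ∑ m ∈ (Finset.range n).filter fun m => ¬ (sched m).card < Pn,
            (sched m).card := by
          apply Finset.sum_le_sum
          intro m hm
          have := (Finset.mem_filter.mp hm).2
          omega
      _ ≤ ∑ m ∈ Finset.range n, (sched m).card :=
          Finset.sum_le_sum_of_subset (Finset.filter_subset _ _)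
  -- put it all together
  have hW1 : 1 ≤ W := by
    rw [hW]
    exact Fintype.card_pos_iff.mpr ⟨u⟩
  have hkey : Pn * (n - I) ≤ W - 1 := le_trans hC (hE ▸ hEle)
  have hstep : n - S + 1 ≤ n - I := by omega
  have : Pn * (n - S + 1) ≤ Pn * (n - I) := Nat.mul_le_mul_left Pn hstep
  rw [Nat.mul_add, Nat.mul_one] at this
  omega
end

section
/- Substitution of priorities preserves constraint entailment: if Γ, π prio ⊨ C is derivable, then [ρ/π]Γ ⊨ [ρ/π]C is derivable, where [ρ/π] denotes capture-avoiding substitution of the priority ρ for the priority variable π in constraints and contexts. -/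
/-! Priorities, constraints, and the constraint entailment judgment. -/

/-- A priority is a priority constant or a priority variable. -/
inductive Prio (Cst Var : Type) where
  | const : Cst → Prio Cst Var
  | pvar : Var → Prio Cst Var

/-- Constraints: conjunctions of atomic inequalities between priorities. -/
inductive Constr (Cst Var : Type) where
  | le : Prio Cst Var → Prio Cst Var → Constr Cst Var
  | conj : Constr Cst Var → Constr Cst Var → Constr Cst Var

/-- The constraint entailment judgment `Γ ⊨_R C`, generated by the rules
hyp, assume, refl, trans, and conj.  The context `Γ` is a set of atomic
constraints; `R` is the declared ordering on priority constants. -/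
inductive Entails (R : Set (Cst × Cst)) (Γ : Set (Prio Cst Var × Prio Cst Var)) :
    Constr Cst Var → Prop where
  | hyp {ρ₁ ρ₂} : (ρ₁, ρ₂) ∈ Γ → Entails R Γ (.le ρ₁ ρ₂)
  | assume {c₁ c₂} : (c₁, c₂) ∈ R → Entails R Γ (.le (.const c₁) (.const c₂))
  | refl {ρ} : Entails R Γ (.le ρ ρ)
  | trans {ρ₁ ρ₂ ρ₃} : Entails R Γ (.le ρ₁ ρ₂) → Entails R Γ (.le ρ₂ ρ₃) →
      Entails R Γ (.le ρ₁ ρ₃)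
  | conj {C₁ C₂} : Entails R Γ C₁ → Entails R Γ C₂ → Entails R Γ (.conj C₁ C₂)

variable {Cst Var : Type} [DecidableEq Var]

/-- Substitution `[ρ/π]` of a priority for a priority variable in a priority. -/
def Prio.substP (ρ : Prio Cst Var) (π : Var) : Prio Cst Var → Prio Cst Var
  | .const c => .const c
  | .pvar x => if x = π then ρ else .pvar x

/-- Substitution `[ρ/π]` in a constraint. -/
def Constr.substP (ρ : Prio Cst Var) (π : Var) : Constr Cst Var → Constr Cst Var
  | .le ρ₁ ρ₂ => .le (Prio.substP ρ π ρ₁) (Prio.substP ρ π ρ₂)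
  | .conj C₁ C₂ => .conj (C₁.substP ρ π) (C₂.substP ρ π)

/-- Substitution `[ρ/π]` in a context of atomic constraints. -/
def substCtx (ρ : Prio Cst Var) (π : Var)
    (Γ : Set (Prio Cst Var × Prio Cst Var)) : Set (Prio Cst Var × Prio Cst Var) :=
  (fun p => (Prio.substP ρ π p.1, Prio.substP ρ π p.2)) '' Γ

/-- Substitution of priorities preserves constraint
entailment: if `Γ, π prio ⊨_R C` is derivable then `[ρ/π]Γ ⊨_R [ρ/π]C` is
derivable.  (Priority-variable declarations play no role in the entailment
rules, so the context consists of its constraints.) -/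
theorem entails_subst (R : Set (Cst × Cst))
    (Γ : Set (Prio Cst Var × Prio Cst Var)) (C : Constr Cst Var)
    (π : Var) (ρ : Prio Cst Var)
    (hent : Entails R Γ C) :
    Entails R (substCtx ρ π Γ) (C.substP ρ π) := by
  induction hent with
  | hyp h => exact .hyp ⟨_, h, rfl⟩
  | assume h => exact .assume h
  | refl => exact .refl
  | trans _ _ ih1 ih2 => exact .trans ih1 ih2
  | conj _ _ ih1 ih2 => exact .conj ih1 ih2
end
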